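/- For r ≥ 1, the r-th Bell number satisfies Dobiński's formula: B_r = (1/e) Σ_{k=0}^∞ k^r / k!. -/

import Mathlib

open Finset

variable {α : Type*} {β : Type*}

namespace Finpartition

/-- Map a finpartition along an embedding. -/
def pmapEmb [DecidableEq α] [DecidableEq β] {s : Finset α} (f : α ↪ β) (P : Finpartition s) :
    Finpartition (s.map f) where
  parts := P.parts.map (Finset.mapEmbedding f).toEmbedding
  supIndep := by
    rw [Finset.supIndep_iff_pairwiseDisjoint]
    rintro p hp q hq hpq
    simp only [coe_map, Set.mem_image, mem_coe, RelEmbedding.coe_toEmbedding] at hp hq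
    obtain ⟨p, hp, rfl⟩ := hp
    obtain ⟨q, hq, rfl⟩ := hq
    have : p ≠ q := fun h => hpq (by rw [h])
    have hd : Disjoint p q := P.disjoint hp hq this
    simp only [Function.onFun, id_eq, Finset.mapEmbedding_apply, Finset.disjoint_map]
    exact hd
  sup_parts := by
    ext b
    simp only [Finset.sup_map, Finset.mem_sup, Function.comp, RelEmbedding.coe_toEmbedding,
      Finset.mapEmbedding_apply, id_eq, Finset.mem_map]
    constructor
    · rintro ⟨p, hp, b, hb, rfl⟩
      exact ⟨b, P.le hp hb, rfl⟩
    · rintro ⟨a, ha, rfl⟩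
      obtain ⟨p, hp, hap⟩ := P.exists_mem ha
      exact ⟨p, hp, a, hap, rfl⟩
  bot_notMem := by
    simp only [bot_eq_empty, Finset.mem_map, RelEmbedding.coe_toEmbedding,
      Finset.mapEmbedding_apply, Finset.map_eq_empty]
    rintro ⟨p, hp, rfl⟩
    exact P.bot_notMem hp

theorem pmapEmb_part [DecidableEq α] [DecidableEq β] {s : Finset α} (f : α ↪ β)
    (P : Finpartition s) {a : α} (ha : a ∈ s) :
    (P.pmapEmb f).part (f a) = (P.part a).map f := by
  refine part_eq_of_mem _ ?_ ?_
  · simp only [pmapEmb, Finset.mem_map, RelEmbedding.coe_toEmbedding, Finset.mapEmbedding_apply]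
    exact ⟨P.part a, P.part_mem.2 ha, rfl⟩
  · exact Finset.mem_map_of_mem f (P.mem_part ha)

end Finpartition

namespace Finpartition

variable [DecidableEq α] {s : Finset α}

/-- The setoid on `↥s` induced by a finpartition of `s`. -/
def toSetoidOn (P : Finpartition s) : Setoid ↥s where
  r x y := ↑y ∈ P.part ↑x
  iseqv := by
    constructor
    · exact fun x => P.mem_part x.2
    · intro x y h
      rw [P.mem_part_iff_part_eq_part y.2 x.2] at h
      rw [P.mem_part_iff_part_eq_part x.2 y.2, h]
    · intro x y z h1 h2
      rw [P.mem_part_iff_part_eq_part y.2 x.2] at h1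
      rw [P.mem_part_iff_part_eq_part z.2 y.2] at h2
      rw [P.mem_part_iff_part_eq_part z.2 x.2, h2, h1]

theorem parts_subset_of_rel {P Q : Finpartition s}
    (hr : ∀ x y : ↥s, (↑y ∈ P.part ↑x) ↔ (↑y ∈ Q.part ↑x)) : P.parts ⊆ Q.parts := by
  intro t ht
  obtain ⟨x, hx⟩ := P.nonempty_of_mem_parts ht
  have hxs : x ∈ s := P.le ht hx
  have h1 : P.part x = t := P.part_eq_of_mem ht hx
  have h2 : P.part x = Q.part x := by
    ext y
    constructor
    · intro hy
      have hys : y ∈ s := P.le (P.part_mem.2 hxs) hy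
      exact (hr ⟨x, hxs⟩ ⟨y, hys⟩).1 hy
    · intro hy
      have hys : y ∈ s := Q.le (Q.part_mem.2 hxs) hy
      exact (hr ⟨x, hxs⟩ ⟨y, hys⟩).2 hy
  rw [← h1, h2]
  exact Q.part_mem.2 hxs

theorem toSetoidOn_bijective :
    Function.Bijective (toSetoidOn (s := s)) := by
  constructor
  · intro P Q h
    have hr : ∀ x y : ↥s, (↑y ∈ P.part ↑x) ↔ (↑y ∈ Q.part ↑x) := by
      intro x y
      exact Setoid.ext_iff.1 h x y
    ext t
    exact ⟨fun ht => parts_subset_of_rel hr ht,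
      fun ht => parts_subset_of_rel (fun x y => (hr x y).symm) ht⟩
  · intro st
    classical
    have hcopy : (Finset.univ : Finset ↥s).map (Function.Embedding.subtype _) = s := by
      rw [Finset.univ_eq_attach, Finset.attach_map_val]
    refine ⟨((Finpartition.ofSetoid st).pmapEmb (Function.Embedding.subtype _)).copy hcopy, ?_⟩
    set P := ((Finpartition.ofSetoid st).pmapEmb (Function.Embedding.subtype _)).copy hcopy
      with hP
    have key : ∀ x : ↥s, P.part ↑x =
        ((Finpartition.ofSetoid st).part x).map (Function.Embedding.subtype _) := by
      intro x
      refine P.part_eq_of_mem ?_ ?_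
      · show _ ∈ P.parts
        have : P.parts = ((Finpartition.ofSetoid st).pmapEmb (Function.Embedding.subtype _)).parts := rfl
        rw [this]
        simp only [pmapEmb, Finset.mem_map, RelEmbedding.coe_toEmbedding,
          Finset.mapEmbedding_apply]
        exact ⟨_, (Finpartition.ofSetoid st).part_mem.2 (Finset.mem_univ x), rfl⟩
      · exact Finset.mem_map_of_mem _ ((Finpartition.ofSetoid st).mem_part (Finset.mem_univ x))
    apply Setoid.ext
    intro x y
    show (↑y ∈ P.part ↑x) ↔ _
    rw [key x]
    simp only [Finset.mem_map, Function.Embedding.coe_subtype]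
    constructor
    · rintro ⟨b, hb, hby⟩
      have : b = y := Subtype.ext hby
      rw [this] at hb
      exact (Finpartition.mem_part_ofSetoid_iff_rel).1 hb
    · intro hxy
      exact ⟨y, (Finpartition.mem_part_ofSetoid_iff_rel).2 hxy, rfl⟩

theorem card_eq_card_setoid (s : Finset α) :
    Nat.card (Finpartition s) = Nat.card (Setoid ↥s) :=
  Nat.card_eq_of_bijective _ toSetoidOn_bijective

end Finpartition

/-- Transport a setoid along an equivalence. -/
def setoidCongr (e : α ≃ β) : Setoid α ≃ Setoid β where
  toFun st := ⟨fun x y => st.r (e.symm x) (e.symm y),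
    ⟨fun x => st.refl _, fun h => st.symm h, fun h1 h2 => st.trans h1 h2⟩⟩
  invFun st := ⟨fun x y => st.r (e x) (e y),
    ⟨fun x => st.refl _, fun h => st.symm h, fun h1 h2 => st.trans h1 h2⟩⟩
  left_inv st := Setoid.ext fun x y => by show st _ _ ↔ _; simp
  right_inv st := Setoid.ext fun x y => by show st _ _ ↔ _; simp

theorem card_finpartition_congr [DecidableEq α] [DecidableEq β] {s : Finset α} {t : Finset β}
    (h : s.card = t.card) :
    Nat.card (Finpartition s) = Nat.card (Finpartition t) := by
  rw [Finpartition.card_eq_card_setoid, Finpartition.card_eq_card_setoid]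
  exact Nat.card_congr (setoidCongr (Finset.equivOfCardEq h))

section Rec

variable [DecidableEq α] {a : α} {s : Finset α}

theorem sigma_helper {u u' : ↥s.powerset} (h : u = u') {Q : Finpartition (s \ u.1)}
    {Q' : Finpartition (s \ u'.1)} (hQ : Q.parts = Q'.parts) :
    (⟨u, Q⟩ : Σ v : ↥s.powerset, Finpartition (s \ v.1)) = ⟨u', Q'⟩ := by
  subst h
  congr 1
  exact Finpartition.ext hQ

/-- Forward map. -/
def recFwd (ha : a ∉ s) (P : Finpartition (insert a s)) :
    Σ u : ↥s.powerset, Finpartition (s \ u.1) :=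
  ⟨⟨(P.part a).erase a, by
      rw [Finset.mem_powerset]
      intro x hx
      rw [Finset.mem_erase] at hx
      have := P.le (P.part_mem.2 (Finset.mem_insert_self a s)) hx.2
      rw [Finset.mem_insert] at this
      tauto⟩,
    (P.avoid (P.part a)).copy (by
      have haP : a ∈ P.part a := P.mem_part (Finset.mem_insert_self a s)
      ext x
      simp only [Finset.mem_sdiff, Finset.mem_insert, Finset.mem_erase]
      constructor
      · rintro ⟨hx1 | hx1, hx2⟩
        · exact absurd haP (hx1 ▸ hx2)
        · exact ⟨hx1, fun h => hx2 h.2⟩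
      · rintro ⟨hx1, hx2⟩
        have hxa : x ≠ a := fun h => ha (h ▸ hx1)
        exact ⟨Or.inr hx1, fun h => hx2 ⟨hxa, h⟩⟩)⟩

/-- Backward map. -/
def recBwd (ha : a ∉ s) (x : Σ u : ↥s.powerset, Finpartition (s \ u.1)) :
    Finpartition (insert a s) :=
  x.2.extend (b := insert a x.1.1)
    (by simp [Finset.bot_eq_empty, Finset.insert_ne_empty])
    (by
      rw [Finset.disjoint_insert_right]
      refine ⟨fun h => ha (Finset.mem_sdiff.1 h).1, Finset.sdiff_disjoint⟩)
    (by
      have hu : x.1.1 ⊆ s := Finset.mem_powerset.1 x.1.2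
      rw [sup_eq_union]
      ext y
      simp only [Finset.mem_union, Finset.mem_sdiff, Finset.mem_insert]
      constructor
      · rintro (⟨h1, _⟩ | h1 | h1)
        · exact Or.inr h1
        · exact Or.inl h1
        · exact Or.inr (hu h1)
      · rintro (h1 | h1)
        · exact Or.inr (Or.inl h1)
        · by_cases hy : y ∈ x.1.1
          · exact Or.inr (Or.inr hy)
          · exact Or.inl ⟨h1, hy⟩)

theorem recBwd_parts (ha : a ∉ s) (x : Σ u : ↥s.powerset, Finpartition (s \ u.1)) :
    (recBwd ha x).parts = insert (insert a x.1.1) x.2.parts := rfl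

theorem recFwd_eq (ha : a ∉ s) {u : Finset α} (hu : u ∈ s.powerset)
    (Q : Finpartition (s \ (⟨u, hu⟩ : ↥s.powerset).1)) (R : Finpartition (insert a s))
    (hRparts : R.parts = insert (insert a u) Q.parts) :
    recFwd ha R = ⟨⟨u, hu⟩, Q⟩ := by
  have hus : u ⊆ s := Finset.mem_powerset.1 hu
  have hau : a ∉ u := fun h => ha (hus h)
  have hbmem : insert a u ∈ R.parts := by rw [hRparts]; exact Finset.mem_insert_self _ _
  have hpart : R.part a = insert a u :=
    R.part_eq_of_mem hbmem (Finset.mem_insert_self a u)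
  have c1 : (R.part a).erase a = u := by rw [hpart, Finset.erase_insert hau]
  have hQd : ∀ d ∈ Q.parts, Disjoint d (insert a u) := by
    intro d hd
    rw [Finset.disjoint_insert_right]
    have hds : d ⊆ s \ u := Q.le hd
    constructor
    · intro h
      exact ha (Finset.mem_sdiff.1 (hds h)).1
    · exact Finset.disjoint_of_subset_left hds Finset.sdiff_disjoint
  have havoid : (R.avoid (R.part a)).parts = Q.parts := by
    rw [hpart]
    ext p
    rw [Finpartition.mem_avoid]
    constructor
    · rintro ⟨d, hd, hdle, rfl⟩
      rw [hRparts, Finset.mem_insert] at hd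
      rcases hd with rfl | hd
      · exact absurd (le_refl _) hdle
      · rw [Finset.sdiff_eq_self_of_disjoint (hQd d hd)]
        exact hd
    · intro hp
      refine ⟨p, by rw [hRparts]; exact Finset.mem_insert_of_mem hp, ?_,
        Finset.sdiff_eq_self_of_disjoint (hQd p hp)⟩
      intro hle
      obtain ⟨y, hy⟩ := Q.nonempty_of_mem_parts hp
      exact Finset.disjoint_left.1 (hQd p hp) hy (hle hy)
  exact sigma_helper (Subtype.ext c1) havoid

/-- Partitions of `insert a s` correspond to a choice of the rest of the block of `a`
together with a partition of the remainder. -/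
def recEquiv (ha : a ∉ s) :
    Finpartition (insert a s) ≃ Σ u : ↥s.powerset, Finpartition (s \ u.1) where
  toFun := recFwd ha
  invFun := recBwd ha
  left_inv P := by
    have haP : a ∈ P.part a := P.mem_part (Finset.mem_insert_self a s)
    have hPmem := P.part_mem.2 (Finset.mem_insert_self a s)
    apply Finpartition.ext
    rw [recBwd_parts]
    show insert (insert a ((P.part a).erase a)) (P.avoid (P.part a)).parts = P.parts
    rw [Finset.insert_erase haP]
    have havoid : (P.avoid (P.part a)).parts = P.parts.erase (P.part a) := by
      ext p
      rw [Finpartition.mem_avoid, Finset.mem_erase]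
      constructor
      · rintro ⟨d, hd, hdle, rfl⟩
        have hdne : d ≠ P.part a := fun h => hdle (h ▸ le_refl _)
        have : Disjoint d (P.part a) := P.disjoint hd hPmem hdne
        rw [Finset.sdiff_eq_self_of_disjoint this]
        exact ⟨hdne, hd⟩
      · rintro ⟨hne, hp⟩
        refine ⟨p, hp, ?_, ?_⟩
        · intro hle
          obtain ⟨x, hx⟩ := P.nonempty_of_mem_parts hp
          exact hne (P.eq_of_mem_parts hp hPmem hx (hle hx))
        · have hd : Disjoint p (P.part a) := P.disjoint hp hPmem hne
          exact Finset.sdiff_eq_self_of_disjoint hd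
    rw [havoid, Finset.insert_erase hPmem]
  right_inv x := by
    obtain ⟨⟨u, hu⟩, Q⟩ := x
    exact recFwd_eq ha hu Q _ (recBwd_parts ha _)

end Rec

/-- The `r`-th Bell number: the number of partitions of an `r`-element set. -/
noncomputable def bell (r : ℕ) : ℕ :=
  Nat.card (Finpartition (Finset.univ : Finset (Fin r)))

noncomputable instance finpartitionFintype [Fintype α] [DecidableEq α] (s : Finset α) :
    Fintype (Finpartition s) :=
  Fintype.ofInjective Finpartition.parts fun _ _ h => Finpartition.ext h

theorem card_finpartition_insert [Fintype α] [DecidableEq α] {a : α} {s : Finset α} (ha : a ∉ s) :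
    Nat.card (Finpartition (insert a s)) = ∑ u ∈ s.powerset, Nat.card (Finpartition (s \ u)) := by
  rw [Nat.card_congr (recEquiv ha), Nat.card_eq_fintype_card, Fintype.card_sigma]
  rw [← Finset.sum_attach s.powerset (fun u => Nat.card (Finpartition (s \ u)))]
  rw [Finset.univ_eq_attach]
  exact Finset.sum_congr rfl fun u _ => (Nat.card_eq_fintype_card).symm

theorem card_finpartition_eq_bell {k : ℕ} (t : Finset (Fin k)) :
    Nat.card (Finpartition t) = bell t.card :=
  card_finpartition_congr (by simp)

theorem bell_zero : bell 0 = 1 := by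
  have h : (Finset.univ : Finset (Fin 0)) = (⊥ : Finset (Fin 0)) := by simp
  rw [bell, h]
  exact Nat.card_unique

theorem bell_succ (n : ℕ) :
    bell (n + 1) = ∑ i ∈ Finset.range (n + 1), n.choose i * bell i := by
  classical
  obtain ⟨a⟩ : Nonempty (Fin (n + 1)) := ⟨0⟩
  set s : Finset (Fin (n + 1)) := Finset.univ.erase a with hs
  have ha : a ∉ s := Finset.notMem_erase _ _
  have hins : insert a s = Finset.univ := Finset.insert_erase (Finset.mem_univ a)
  have hscard : s.card = n := by
    rw [hs, Finset.card_erase_of_mem (Finset.mem_univ a), Finset.card_univ, Fintype.card_fin]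
    rfl
  have h1 : bell (n + 1) = Nat.card (Finpartition (insert a s)) := by rw [hins]; rfl
  rw [h1, card_finpartition_insert ha]
  have h2 : ∀ u ∈ s.powerset, Nat.card (Finpartition (s \ u)) = bell (n - u.card) := by
    intro u hu
    rw [card_finpartition_eq_bell, Finset.card_sdiff_of_subset (Finset.mem_powerset.1 hu), hscard]
  rw [Finset.sum_congr rfl h2]
  rw [Finset.sum_powerset_apply_card (fun m => bell (n - m)) (x := s), hscard]
  rw [← Finset.sum_range_reflect (fun j => n.choose j • bell (n - j)) (n + 1)]
  refine Finset.sum_congr rfl fun j hj => ?_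
  rw [Finset.mem_range, Nat.lt_succ_iff] at hj
  simp only [Nat.add_sub_cancel, smul_eq_mul]
  rw [Nat.choose_symm hj, Nat.sub_sub_self hj]


noncomputable def TT (r : ℕ) : ℝ := ∑' k : ℕ, (k : ℝ) ^ r / (k.factorial : ℝ)

theorem shift_eq (r k : ℕ) :
    (((k + 1 : ℕ) : ℝ)) ^ (r + 1) / (((k + 1).factorial : ℕ) : ℝ)
      = ∑ i ∈ Finset.range (r + 1), (r.choose i : ℝ) * ((k : ℝ) ^ i / (k.factorial : ℝ)) := by
  have hkf : ((k.factorial : ℕ) : ℝ) ≠ 0 := by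
    exact_mod_cast k.factorial_ne_zero
  have hk1 : ((k : ℝ) + 1) ≠ 0 := by positivity
  have hfac : (((k + 1).factorial : ℕ) : ℝ) = ((k : ℝ) + 1) * (k.factorial : ℝ) := by
    rw [Nat.factorial_succ]
    push_cast
    ring
  rw [hfac]
  push_cast
  rw [pow_succ, mul_div_assoc]
  have hdiv : ((k : ℝ) + 1) / (((k : ℝ) + 1) * (k.factorial : ℝ)) = 1 / (k.factorial : ℝ) := by
    rw [div_eq_div_iff (by positivity) hkf]
    ring
  rw [hdiv, add_pow]
  rw [Finset.sum_mul]
  refine Finset.sum_congr rfl fun i _ => ?_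
  simp only [one_pow, mul_one]
  field_simp

theorem summable_T (r : ℕ) : Summable (fun k : ℕ => (k : ℝ) ^ r / (k.factorial : ℝ)) := by
  induction r using Nat.strong_induction_on with
  | _ r ih =>
    match r with
    | 0 =>
      have := Real.summable_pow_div_factorial 1
      simpa using this
    | r + 1 =>
      rw [← summable_nat_add_iff 1]
      have he : (fun k : ℕ => ((k + 1 : ℕ) : ℝ) ^ (r + 1) / (((k + 1).factorial : ℕ) : ℝ))
          = fun k : ℕ => ∑ i ∈ Finset.range (r + 1),
              (r.choose i : ℝ) * ((k : ℝ) ^ i / (k.factorial : ℝ)) := by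
        funext k
        exact shift_eq r k
      simp only [Nat.cast_add, Nat.cast_one] at he ⊢
      rw [he]
      exact summable_sum fun i hi =>
        ((ih i (by rw [Finset.mem_range] at hi; omega)).mul_left _)

theorem T_succ (r : ℕ) : TT (r + 1) = ∑ i ∈ Finset.range (r + 1), (r.choose i : ℝ) * TT i := by
  rw [TT, Summable.tsum_eq_zero_add (summable_T (r + 1))]
  have h0 : ((0 : ℕ) : ℝ) ^ (r + 1) / ((Nat.factorial 0 : ℕ) : ℝ) = 0 := by simp
  rw [h0, zero_add]
  have he : ∀ k : ℕ, ((k + 1 : ℕ) : ℝ) ^ (r + 1) / (((k + 1).factorial : ℕ) : ℝ)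
      = ∑ i ∈ Finset.range (r + 1), (r.choose i : ℝ) * ((k : ℝ) ^ i / (k.factorial : ℝ)) :=
    shift_eq r
  rw [tsum_congr he, Summable.tsum_finsetSum (fun i _ => (summable_T i).mul_left _)]
  exact Finset.sum_congr rfl fun i _ => tsum_mul_left

theorem T_zero : TT 0 = Real.exp 1 := by
  rw [Real.exp_eq_exp_ℝ, NormedSpace.exp_eq_tsum ℝ, TT]
  apply tsum_congr
  intro k
  simp [one_div]

theorem bell_key : ∀ r : ℕ, (bell r : ℝ) * Real.exp 1 = TT r := by
  intro r
  induction r using Nat.strong_induction_on with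
  | _ r ih =>
    match r with
    | 0 => rw [bell_zero, T_zero, Nat.cast_one, one_mul]
    | r + 1 =>
      rw [bell_succ, T_succ]
      push_cast
      rw [Finset.sum_mul]
      refine Finset.sum_congr rfl fun i hi => ?_
      rw [Finset.mem_range] at hi
      rw [mul_assoc, ih i hi]

theorem dobinski (r : ℕ) (hr : 1 ≤ r) :
    (bell r : ℝ) = (1 / Real.exp 1) * ∑' k : ℕ, (k : ℝ) ^ r / (k.factorial : ℝ) := by
  have h := bell_key r
  rw [TT] at h
  rw [← h]
  field_simp [Real.exp_ne_zero]
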